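/- Let K be an m×n real matrix such that A − BK is Schur stable, let P be a real symmetric matrix satisfying P = Q + KᵀRK + (A − BK)ᵀP(A − BK), let K' = (R + BᵀPB)⁻¹BᵀPA, and let P' be a real symmetric matrix satisfying P' = Q + K'ᵀRK' + (A − BK')ᵀP'(A − BK'). Then P' ≤ P. Moreover, if P★ is any symmetric positive semidefinite solution of the ARE, then P★ ≤ P'. -/

import Mathlib

open Matrix

/-- A real square matrix is Schur stable if every eigenvalue of it, viewed as a
complex matrix, has modulus strictly less than `1`. -/
def SchurStable {n : ℕ} (M : Matrix (Fin n) (Fin n) ℝ) : Prop :=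
  ∀ μ ∈ spectrum ℂ (M.map (algebraMap ℝ ℂ)), ‖μ‖ < 1

section RicAuxSection
open Filter Complex

namespace RicAux

variable {n m : ℕ}

attribute [local instance] Matrix.linftyOpNormedRing Matrix.linftyOpNormedAlgebra

lemma entry_le_norm {n : ℕ} (A : Matrix (Fin n) (Fin n) ℂ) (i j : Fin n) :
    ‖A i j‖ ≤ ‖A‖ := by
  have h1 : ‖A i j‖₊ ≤ ∑ j', ‖A i j'‖₊ :=
    Finset.single_le_sum (f := fun j' => ‖A i j'‖₊) (fun _ _ => by positivity) (Finset.mem_univ j)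
  have h2 : (∑ j', ‖A i j'‖₊) ≤ ‖A‖₊ := by
    rw [Matrix.linfty_opNNNorm_def]
    exact Finset.le_sup (f := fun i => ∑ j', ‖A i j'‖₊) (Finset.mem_univ i)

  exact_mod_cast h1.trans h2

lemma schur_bound {n : ℕ} {M : Matrix (Fin n) (Fin n) ℝ} (h : SchurStable M) :
    ∃ e : ℕ → ℝ, Tendsto e atTop (nhds 0) ∧ ∀ (k : ℕ) (i j : Fin n), |(M ^ k) i j| ≤ e k := by
  rcases Nat.eq_zero_or_pos n with hn | hn
  · exact ⟨fun _ => 0, tendsto_const_nhds, fun k i j => absurd i.isLt (by omega)⟩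
  · have : Nonempty (Fin n) := ⟨⟨0, hn⟩⟩
    have : Nontrivial (Matrix (Fin n) (Fin n) ℂ) := by
      refine ⟨1, 0, fun h01 => ?_⟩
      have := congrFun (congrFun h01 ⟨0, hn⟩) ⟨0, hn⟩
      simp [Matrix.one_apply] at this
    set M' : Matrix (Fin n) (Fin n) ℂ := M.map (algebraMap ℝ ℂ) with hM'
    have hsr : spectralRadius ℂ M' < 1 := by
      have := spectrum.spectralRadius_lt_of_forall_lt (a := M') (r := 1)
        (fun z hz => by simpa [← NNReal.coe_lt_coe] using h z hz)
      simpa using this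
    obtain ⟨r, hr0, hr1⟩ := ENNReal.lt_iff_exists_nnreal_btwn.mp hsr
    have hgel := spectrum.pow_nnnorm_pow_one_div_tendsto_nhds_spectralRadius M'
    have hev : ∀ᶠ k : ℕ in atTop, (‖M' ^ k‖₊ : ENNReal) ^ (1 / (k : ℝ)) < (r : ENNReal) :=
      hgel.eventually_lt_const hr0
    refine ⟨fun k => ‖M' ^ k‖, ?_, ?_⟩
    · refine squeeze_zero_norm' ?_
        (tendsto_pow_atTop_nhds_zero_of_lt_one (r := (r:ℝ)) r.coe_nonneg (by exact_mod_cast hr1))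
      · filter_upwards [hev, eventually_ge_atTop 1] with k hk hk1
        have hkne : (k : ℝ) ≠ 0 := by positivity
        have : ((‖M' ^ k‖₊ : ENNReal) ^ (1 / (k : ℝ))) ^ (k : ℝ) < (r : ENNReal) ^ (k : ℝ) := by
          apply ENNReal.rpow_lt_rpow hk (by positivity)
        rw [← ENNReal.rpow_mul, one_div_mul_cancel hkne, ENNReal.rpow_one] at this
        have h2 : (‖M' ^ k‖₊ : ENNReal) < ((r ^ k : NNReal) : ENNReal) := by
          rwa [← ENNReal.coe_rpow_of_nonneg r (by positivity : (0:ℝ) ≤ (k:ℝ)),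
            NNReal.rpow_natCast] at this
        have h3 : ‖M' ^ k‖₊ < r ^ k := by exact_mod_cast h2
        simp only [norm_norm]
        exact_mod_cast h3.le
    · intro k i j
      have hmk : (M ^ k).map (algebraMap ℝ ℂ) = M' ^ k := by
        rw [hM']
        simpa using map_pow ((algebraMap ℝ ℂ).mapMatrix) M k
      have : |(M ^ k) i j| = ‖(M' ^ k) i j‖ := by
        rw [← hmk]; simp [Matrix.map_apply, Complex.norm_real]
      rw [this]
      exact entry_le_norm _ i j


lemma lyap_psd {n : ℕ} {M S X : Matrix (Fin n) (Fin n) ℝ} (hM : SchurStable M)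
    (hS : S.PosSemidef) (hX : X.IsHermitian) (heq : X = S + Mᵀ * X * M) :
    X.PosSemidef := by
  obtain ⟨e, he0, hbd⟩ := schur_bound hM
  refine PosSemidef.of_dotProduct_mulVec_nonneg hX fun x => ?_
  rw [star_trivial]
  -- single-step identity
  have key : ∀ y : Fin n → ℝ,
      y ⬝ᵥ X *ᵥ y = y ⬝ᵥ S *ᵥ y + (M *ᵥ y) ⬝ᵥ X *ᵥ (M *ᵥ y) := by
    intro y
    conv_lhs => rw [heq]
    rw [add_mulVec, dotProduct_add]
    congr 1
    rw [← mulVec_mulVec, ← mulVec_mulVec, dotProduct_mulVec, vecMul_transpose]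
  have step : ∀ N : ℕ,
      x ⬝ᵥ X *ᵥ x = (∑ k ∈ Finset.range N,
          ((M ^ k) *ᵥ x) ⬝ᵥ S *ᵥ ((M ^ k) *ᵥ x))
        + ((M ^ N) *ᵥ x) ⬝ᵥ X *ᵥ ((M ^ N) *ᵥ x) := by
    intro N
    induction N with
    | zero => simp
    | succ N ih =>
      have hMM : M *ᵥ ((M ^ N) *ᵥ x) = (M ^ (N + 1)) *ᵥ x := by
        rw [mulVec_mulVec, ← pow_succ']
      rw [ih, Finset.sum_range_succ, key ((M ^ N) *ᵥ x), hMM]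
      ring
  have hge : ∀ N : ℕ, ((M ^ N) *ᵥ x) ⬝ᵥ X *ᵥ ((M ^ N) *ᵥ x) ≤ x ⬝ᵥ X *ᵥ x := by
    intro N
    rw [step N]
    have hnn : 0 ≤ ∑ k ∈ Finset.range N, ((M ^ k) *ᵥ x) ⬝ᵥ S *ᵥ ((M ^ k) *ᵥ x) := by
      apply Finset.sum_nonneg
      intro k _
      simpa [star_trivial] using hS.dotProduct_mulVec_nonneg ((M ^ k) *ᵥ x)
    linarith
  -- the tail tends to zero
  set s : ℝ := ∑ j, |x j| with hs
  have hy : ∀ (N : ℕ) (i : Fin n), |((M ^ N) *ᵥ x) i| ≤ e N * s := by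
    intro N i
    calc |((M ^ N) *ᵥ x) i| = |∑ j, (M ^ N) i j * x j| := by rw [mulVec, dotProduct]
      _ ≤ ∑ j, |(M ^ N) i j * x j| := Finset.abs_sum_le_sum_abs _ _
      _ ≤ ∑ j, e N * |x j| := by
          refine Finset.sum_le_sum fun j _ => ?_
          rw [abs_mul]
          exact mul_le_mul_of_nonneg_right (hbd N i j) (abs_nonneg _)
      _ = e N * s := by rw [hs, Finset.mul_sum]
  set C : ℝ := ∑ i, ∑ j, |X i j| with hC
  have htail0 : ∀ N : ℕ,
      |((M ^ N) *ᵥ x) ⬝ᵥ X *ᵥ ((M ^ N) *ᵥ x)| ≤ e N * s * (e N * s) * C := by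
    intro N
    calc |((M ^ N) *ᵥ x) ⬝ᵥ X *ᵥ ((M ^ N) *ᵥ x)|
        = |∑ i, ∑ j, ((M ^ N) *ᵥ x) i * (X i j * ((M ^ N) *ᵥ x) j)| := by
          simp [dotProduct, mulVec, Finset.mul_sum]
      _ ≤ ∑ i, |∑ j, ((M ^ N) *ᵥ x) i * (X i j * ((M ^ N) *ᵥ x) j)| :=
          Finset.abs_sum_le_sum_abs _ _
      _ ≤ ∑ i, ∑ j, |((M ^ N) *ᵥ x) i * (X i j * ((M ^ N) *ᵥ x) j)| :=
          Finset.sum_le_sum fun i _ => Finset.abs_sum_le_sum_abs _ _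
      _ ≤ ∑ i, ∑ j, (e N * s * (e N * s)) * |X i j| := by
          refine Finset.sum_le_sum fun i _ => Finset.sum_le_sum fun j _ => ?_
          rw [abs_mul, abs_mul]
          have h1 := hy N i
          have h2 := hy N j
          have h3 : (0:ℝ) ≤ |((M ^ N) *ᵥ x) i| := abs_nonneg _
          have h4 : (0:ℝ) ≤ |((M ^ N) *ᵥ x) j| := abs_nonneg _
          have h5 : (0:ℝ) ≤ |X i j| := abs_nonneg _
          have h6 : |((M ^ N) *ᵥ x) i| * |((M ^ N) *ᵥ x) j| ≤ (e N * s) * (e N * s) :=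
            mul_le_mul h1 h2 h4 (h3.trans h1)
          nlinarith [mul_le_mul_of_nonneg_right h6 h5]
      _ = e N * s * (e N * s) * C := by
          rw [hC]
          simp only [Finset.mul_sum]
  have htend : Tendsto (fun N => ((M ^ N) *ᵥ x) ⬝ᵥ X *ᵥ ((M ^ N) *ᵥ x)) atTop (nhds 0) := by
    refine squeeze_zero_norm htail0 ?_
    have : Tendsto (fun N => e N * s * (e N * s) * C) atTop
        (nhds (0 * s * (0 * s) * C)) := by
      exact (((he0.mul_const s).mul (he0.mul_const s)).mul_const C)
    simpa using this
  exact le_of_tendsto htend (Filter.Eventually.of_forall hge)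

lemma mulVec_map {p n : ℕ} (N : Matrix (Fin p) (Fin n) ℝ) (v : Fin n → ℂ) (i : Fin p) :
    ((N.map (algebraMap ℝ ℂ)) *ᵥ v) i
      = ((N *ᵥ fun j => (v j).re) i : ℝ) + ((N *ᵥ fun j => (v j).im) i : ℝ) * Complex.I := by
  simp only [mulVec, dotProduct, Matrix.map_apply]
  apply Complex.ext
  · simp [Complex.re_sum, Complex.mul_re]
  · simp [Complex.im_sum, Complex.mul_im, Finset.sum_add_distrib]

lemma quad_map {n : ℕ} (N : Matrix (Fin n) (Fin n) ℝ) (hN : N.IsSymm) (v : Fin n → ℂ) :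
    star v ⬝ᵥ (N.map (algebraMap ℝ ℂ)) *ᵥ v
      = (((fun i => (v i).re) ⬝ᵥ N *ᵥ (fun i => (v i).re)
          + (fun i => (v i).im) ⬝ᵥ N *ᵥ (fun i => (v i).im) : ℝ) : ℂ) := by
  have him : (∑ i, ∑ j, N i j * ((v i).re * (v j).im - (v i).im * (v j).re)) = 0 := by
    have h1 : (∑ i, ∑ j, N i j * ((v i).re * (v j).im - (v i).im * (v j).re))
        = ∑ j, ∑ i, N i j * ((v i).re * (v j).im - (v i).im * (v j).re) :=
      Finset.sum_comm
    have h2 : (∑ j, ∑ i, N i j * ((v i).re * (v j).im - (v i).im * (v j).re))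
        = -(∑ j, ∑ i, N j i * ((v j).re * (v i).im - (v j).im * (v i).re)) := by
      rw [← Finset.sum_neg_distrib]
      refine Finset.sum_congr rfl fun j _ => ?_
      rw [← Finset.sum_neg_distrib]
      refine Finset.sum_congr rfl fun i _ => ?_
      rw [hN.apply j i]
      ring
    linarith [h1, h2]
  have hre : (∑ i, ∑ j, N i j * ((v i).re * (v j).re + (v i).im * (v j).im))
      = (fun i => (v i).re) ⬝ᵥ N *ᵥ (fun i => (v i).re)
        + (fun i => (v i).im) ⬝ᵥ N *ᵥ (fun i => (v i).im) := by
    simp only [dotProduct, mulVec, Finset.mul_sum, ← Finset.sum_add_distrib]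
    refine Finset.sum_congr rfl fun i _ => Finset.sum_congr rfl fun j _ => ?_
    ring
  calc star v ⬝ᵥ (N.map (algebraMap ℝ ℂ)) *ᵥ v
      = ∑ i, ∑ j, (((N i j * ((v i).re * (v j).re + (v i).im * (v j).im) : ℝ) : ℂ)
        + ((N i j * ((v i).re * (v j).im - (v i).im * (v j).re) : ℝ) : ℂ) * Complex.I) := by
        simp only [dotProduct, mulVec, Matrix.map_apply, Pi.star_apply, Finset.mul_sum]
        refine Finset.sum_congr rfl fun i _ => Finset.sum_congr rfl fun j _ => ?_
        apply Complex.ext <;>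
          simp [Complex.mul_re, Complex.mul_im, Complex.star_def] <;> ring
    _ = ((∑ i, ∑ j, N i j * ((v i).re * (v j).re + (v i).im * (v j).im) : ℝ) : ℂ)
        + ((∑ i, ∑ j, N i j * ((v i).re * (v j).im - (v i).im * (v j).re) : ℝ) : ℂ)
          * Complex.I := by
        push_cast
        simp [Finset.sum_add_distrib, Finset.sum_mul]
    _ = ((∑ i, ∑ j, N i j * ((v i).re * (v j).re + (v i).im * (v j).im) : ℝ) : ℂ) := by
        rw [him]
        simp
    _ = _ := by rw [hre]

lemma exists_eigenvector {n : ℕ} {M' : Matrix (Fin n) (Fin n) ℂ} {μ : ℂ}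
    (h : μ ∈ spectrum ℂ M') :
    ∃ v : Fin n → ℂ, v ≠ 0 ∧ M' *ᵥ v = μ • v := by
  rw [← AlgEquiv.spectrum_eq (Matrix.toLinAlgEquiv (Pi.basisFun ℂ (Fin n))),
    ← Module.End.hasEigenvalue_iff_mem_spectrum] at h
  obtain ⟨v, hv⟩ := h.exists_hasEigenvector
  refine ⟨v, hv.right, ?_⟩
  have happ := hv.apply_eq_smul
  have : (Matrix.toLinAlgEquiv (Pi.basisFun ℂ (Fin n))) M' v = M' *ᵥ v := by
    simp [Matrix.toLinAlgEquiv_apply]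
    funext i
    simp [Pi.basisFun_apply, Pi.basisFun_repr, Finset.sum_apply, Pi.single_apply,
      mulVec, dotProduct]
  rw [this] at happ
  exact happ




lemma expand_lyap {n m : ℕ} (A X : Matrix (Fin n) (Fin n) ℝ) (B : Matrix (Fin n) (Fin m) ℝ)
    (R G : Matrix (Fin m) (Fin m) ℝ) (hG : G = R + Bᵀ * X * B)
    (K : Matrix (Fin m) (Fin n) ℝ) :
    Kᵀ * R * K + (A - B * K)ᵀ * X * (A - B * K)
      = Aᵀ * (X * A) + Kᵀ * (G * K) - Aᵀ * (X * (B * K)) - Kᵀ * (Bᵀ * (X * A)) := by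
  subst hG
  simp only [Matrix.transpose_sub, Matrix.transpose_mul, Matrix.add_mul, Matrix.mul_add,
    Matrix.sub_mul, Matrix.mul_sub, Matrix.mul_assoc]
  abel

lemma cos {n m : ℕ} (A X : Matrix (Fin n) (Fin n) ℝ) (B : Matrix (Fin n) (Fin m) ℝ)
    (R G : Matrix (Fin m) (Fin m) ℝ) (hG : G = R + Bᵀ * X * B)
    (Kh : Matrix (Fin m) (Fin n) ℝ)
    (hGK : G * Kh = Bᵀ * X * A) (hKG : Khᵀ * G = Aᵀ * X * B)
    (K1 : Matrix (Fin m) (Fin n) ℝ) :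
    K1ᵀ * R * K1 + (A - B * K1)ᵀ * X * (A - B * K1)
      = Khᵀ * R * Kh + (A - B * Kh)ᵀ * X * (A - B * Kh)
        + (K1 - Kh)ᵀ * G * (K1 - Kh) := by
  have e3 : Khᵀ * (G * K1) = Aᵀ * (X * (B * K1)) := by
    rw [← Matrix.mul_assoc, hKG, Matrix.mul_assoc, Matrix.mul_assoc]
  have e4 : K1ᵀ * (G * Kh) = K1ᵀ * (Bᵀ * (X * A)) := by
    rw [hGK, Matrix.mul_assoc]
  have e5 : Khᵀ * (G * Kh) = Khᵀ * (Bᵀ * (X * A)) := by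
    rw [hGK, Matrix.mul_assoc]
  have e6 : Aᵀ * (X * (B * Kh)) = Khᵀ * (Bᵀ * (X * A)) := by
    rw [← Matrix.mul_assoc, ← Matrix.mul_assoc, ← hKG, Matrix.mul_assoc, e5]
  rw [expand_lyap A X B R G hG K1, expand_lyap A X B R G hG Kh]
  simp only [Matrix.transpose_sub, Matrix.sub_mul, Matrix.mul_sub, Matrix.mul_assoc]
  rw [e3, e4, e5, e6]
  abel


lemma isSymm_of_isHermitian {Z : Matrix (Fin n) (Fin n) ℝ} (h : Z.IsHermitian) : Z.IsSymm := by
  rwa [Matrix.IsHermitian, conjTranspose_eq_transpose_of_trivial] at h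

lemma isHermitian_of_isSymm {Z : Matrix (Fin n) (Fin n) ℝ} (h : Z.IsSymm) : Z.IsHermitian := by
  rwa [Matrix.IsHermitian, conjTranspose_eq_transpose_of_trivial]

lemma map_transpose (M : Matrix (Fin n) (Fin m) ℝ) :
    (Mᵀ).map (algebraMap ℝ ℂ) = (M.map (algebraMap ℝ ℂ))ᴴ := by
  ext i j
  simp [Matrix.conjTranspose_apply, Matrix.map_apply, Complex.conj_ofReal]

lemma stable_of_obs (A : Matrix (Fin n) (Fin n) ℝ) (B : Matrix (Fin n) (Fin m) ℝ)
    (Q : Matrix (Fin n) (Fin n) ℝ) (R : Matrix (Fin m) (Fin m) ℝ)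
    (hQ : Q.PosSemidef) (hR : R.PosDef)
    (hObs : ∀ x : Fin n → ℝ, (∀ k : ℕ, Q.mulVec ((A ^ k).mulVec x) = 0) → x = 0)
    (K' : Matrix (Fin m) (Fin n) ℝ) (P : Matrix (Fin n) (Fin n) ℝ)
    (hPsymm : P.IsSymm) (hPpsd : P.PosSemidef)
    (hineq : (P - (Q + K'ᵀ * R * K' + (A - B * K')ᵀ * P * (A - B * K'))).PosSemidef) :
    SchurStable (A - B * K') := by
  intro μ hμ
  by_contra hlt
  push_neg at hlt
  obtain ⟨v, hv0, hveq⟩ := exists_eigenvector hμ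
  set c := algebraMap ℝ ℂ
  set M := A - B * K' with hM
  set a : Fin n → ℝ := fun i => (v i).re with ha
  set b : Fin n → ℝ := fun i => (v i).im with hb
  -- symmetry facts
  have hQsymm : Q.IsSymm := isSymm_of_isHermitian hQ.1
  have hKRK : (K'ᵀ * R * K').IsSymm := by
    rw [Matrix.IsSymm]
    simp only [Matrix.transpose_mul, Matrix.transpose_transpose, ← Matrix.mul_assoc]
    rw [(isSymm_of_isHermitian hR.posSemidef.1 : Rᵀ = R)]
  have hMPM : (Mᵀ * P * M).IsSymm := by
    rw [Matrix.IsSymm]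
    simp only [Matrix.transpose_mul, Matrix.transpose_transpose, ← Matrix.mul_assoc]
    rw [(hPsymm : Pᵀ = P)]
  -- real quadratic nonnegativity
  have hq : ∀ (Z : Matrix (Fin n) (Fin n) ℝ), Z.PosSemidef → ∀ y : Fin n → ℝ,
      0 ≤ y ⬝ᵥ Z *ᵥ y := fun Z hZ y => by simpa [star_trivial] using hZ.dotProduct_mulVec_nonneg y
  -- the main inequality at a and b
  have hsub : ∀ y : Fin n → ℝ,
      y ⬝ᵥ (P - (Q + K'ᵀ * R * K' + Mᵀ * P * M)) *ᵥ y
        = y ⬝ᵥ P *ᵥ y - (y ⬝ᵥ Q *ᵥ y + y ⬝ᵥ (K'ᵀ * R * K') *ᵥ y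
            + y ⬝ᵥ (Mᵀ * P * M) *ᵥ y) := by
    intro y
    simp [Matrix.sub_mulVec, Matrix.add_mulVec, dotProduct_sub, dotProduct_add]
  have hia := hq _ hineq a
  have hib := hq _ hineq b
  rw [hsub a] at hia
  rw [hsub b] at hib
  -- complex identity for the M-quadratic form
  have hcplx : a ⬝ᵥ (Mᵀ * P * M) *ᵥ a + b ⬝ᵥ (Mᵀ * P * M) *ᵥ b
      = ‖μ‖ ^ 2 * (a ⬝ᵥ P *ᵥ a + b ⬝ᵥ P *ᵥ b) := by
    have h1 := quad_map (Mᵀ * P * M) hMPM v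
    have h2 := quad_map P hPsymm v
    have hmap : (Mᵀ * P * M).map c = (M.map c)ᴴ * (P.map c) * (M.map c) := by
      rw [Matrix.map_mul, Matrix.map_mul, map_transpose]
    have h3 : star v ⬝ᵥ ((Mᵀ * P * M).map c) *ᵥ v
        = star (M.map c *ᵥ v) ⬝ᵥ (P.map c) *ᵥ (M.map c *ᵥ v) := by
      rw [hmap, ← Matrix.mulVec_mulVec, ← Matrix.mulVec_mulVec,
        Matrix.star_mulVec, ← Matrix.dotProduct_mulVec]
    rw [h3, hveq] at h1
    have h4 : star (μ • v) ⬝ᵥ (P.map c) *ᵥ (μ • v)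
        = (starRingEnd ℂ μ * μ) * (star v ⬝ᵥ (P.map c) *ᵥ v) := by
      rw [star_smul, Matrix.mulVec_smul, smul_dotProduct, dotProduct_smul]
      simp [smul_smul, RCLike.star_def]
      ring
    rw [h4, h2] at h1
    have h5 : starRingEnd ℂ μ * μ = ((‖μ‖ ^ 2 : ℝ) : ℂ) := by
      rw [mul_comm, Complex.mul_conj]
      norm_cast
      rw [Complex.normSq_eq_norm_sq]
    rw [h5, ← Complex.ofReal_mul] at h1
    exact_mod_cast h1.symm
  -- all pieces vanish
  have hP2 : 0 ≤ a ⬝ᵥ P *ᵥ a + b ⬝ᵥ P *ᵥ b :=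
    add_nonneg (hq _ hPpsd a) (hq _ hPpsd b)
  have hmu2 : (1 : ℝ) ≤ ‖μ‖ ^ 2 := by nlinarith [hlt]
  have hS1 : a ⬝ᵥ P *ᵥ a + b ⬝ᵥ P *ᵥ b ≤ ‖μ‖ ^ 2 * (a ⬝ᵥ P *ᵥ a + b ⬝ᵥ P *ᵥ b) :=
    le_mul_of_one_le_left hP2 hmu2
  have hKRKpsd : (K'ᵀ * R * K').PosSemidef := by
    have := hR.posSemidef.conjTranspose_mul_mul_same K'
    rwa [conjTranspose_eq_transpose_of_trivial] at this
  have key0 : a ⬝ᵥ Q *ᵥ a + b ⬝ᵥ Q *ᵥ b + a ⬝ᵥ (K'ᵀ * R * K') *ᵥ a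
      + b ⬝ᵥ (K'ᵀ * R * K') *ᵥ b ≤ 0 := by linarith [hia, hib, hcplx, hS1]
  have hQa : a ⬝ᵥ Q *ᵥ a = 0 := by
    have := hq _ hQ a
    have := hq _ hQ b
    have := hq _ hKRKpsd a
    have := hq _ hKRKpsd b
    linarith
  have hQb : b ⬝ᵥ Q *ᵥ b = 0 := by
    have := hq _ hQ a
    have := hq _ hQ b
    have := hq _ hKRKpsd a
    have := hq _ hKRKpsd b
    linarith
  have hKRKa : a ⬝ᵥ (K'ᵀ * R * K') *ᵥ a = 0 := by
    have := hq _ hQ a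
    have := hq _ hQ b
    have := hq _ hKRKpsd a
    have := hq _ hKRKpsd b
    linarith
  have hKRKb : b ⬝ᵥ (K'ᵀ * R * K') *ᵥ b = 0 := by
    have := hq _ hQ a
    have := hq _ hQ b
    have := hq _ hKRKpsd a
    have := hq _ hKRKpsd b
    linarith
  -- quadratic form in R forces K' *ᵥ a = 0
  have hKRKquad : ∀ y : Fin n → ℝ, y ⬝ᵥ (K'ᵀ * R * K') *ᵥ y
      = (K' *ᵥ y) ⬝ᵥ R *ᵥ (K' *ᵥ y) := by
    intro y
    rw [← Matrix.mulVec_mulVec, ← Matrix.mulVec_mulVec, dotProduct_mulVec,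
      vecMul_transpose]
  have hKa : K' *ᵥ a = 0 := by
    by_contra hne
    have := hR.dotProduct_mulVec_pos hne
    rw [star_trivial, ← hKRKquad a] at this
    linarith
  have hKb : K' *ᵥ b = 0 := by
    by_contra hne
    have := hR.dotProduct_mulVec_pos hne
    rw [star_trivial, ← hKRKquad b] at this
    linarith
  have hQav : Q *ᵥ a = 0 :=
    (hQ.dotProduct_mulVec_zero_iff a).mp (by simpa [star_trivial] using hQa)
  have hQbv : Q *ᵥ b = 0 :=
    (hQ.dotProduct_mulVec_zero_iff b).mp (by simpa [star_trivial] using hQb)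
  -- v is an eigenvector of A itself
  have hKv : (K'.map c) *ᵥ v = 0 := by
    funext i
    have h9 := mulVec_map K' v i
    rw [← ha, ← hb, hKa, hKb] at h9
    simpa [c] using h9
  have hAv : (A.map c) *ᵥ v = μ • v := by
    have hmapM : M.map c = A.map c - (B.map c) * (K'.map c) := by
      rw [hM, Matrix.map_sub _ (map_sub c), Matrix.map_mul]
    rw [hmapM, Matrix.sub_mulVec, ← Matrix.mulVec_mulVec, hKv, Matrix.mulVec_zero,
      sub_zero] at hveq
    exact hveq
  have hpow : ∀ k : ℕ, ((A ^ k).map c) *ᵥ v = (μ ^ k) • v := by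
    intro k
    induction k with
    | zero => simp [Matrix.map_one]
    | succ k ih =>
      rw [pow_succ', Matrix.map_mul, ← Matrix.mulVec_mulVec, ih, Matrix.mulVec_smul,
        hAv, smul_smul, ← pow_succ]
  have hQv : (Q.map c) *ᵥ v = 0 := by
    funext i
    have h9 := mulVec_map Q v i
    rw [← ha, ← hb, hQav, hQbv] at h9
    simpa [c] using h9
  have hobs : ∀ y : Fin n → ℝ, (y = a ∨ y = b) → ∀ k : ℕ, Q *ᵥ ((A ^ k) *ᵥ y) = 0 := by
    intro y hy k
    have h7 : ((Q * A ^ k).map c) *ᵥ v = 0 := by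
      rw [Matrix.map_mul, ← Matrix.mulVec_mulVec, hpow k, Matrix.mulVec_smul, hQv,
        smul_zero]
    have h8 : (Q * A ^ k) *ᵥ a = 0 ∧ (Q * A ^ k) *ᵥ b = 0 := by
      constructor <;> funext i <;>
      · have h9 := mulVec_map (Q * A ^ k) v i
        rw [← ha, ← hb] at h9
        have h10 := congrFun h7 i
        rw [h9] at h10
        have h11 := congrArg Complex.re h10
        have h12 := congrArg Complex.im h10
        simp at h11 h12
        simp [h11, h12]
    rw [Matrix.mulVec_mulVec]
    rcases hy with rfl | rfl
    · exact h8.1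
    · exact h8.2
  have ha0 : a = 0 := hObs a (hobs a (Or.inl rfl))
  have hb0 : b = 0 := hObs b (hobs b (Or.inr rfl))
  apply hv0
  funext i
  apply Complex.ext
  · simpa using congrFun ha0 i
  · simpa using congrFun hb0 i


end RicAux
theorem stmt_1 {n m : ℕ}
    (A : Matrix (Fin n) (Fin n) ℝ) (B : Matrix (Fin n) (Fin m) ℝ)
    (Q : Matrix (Fin n) (Fin n) ℝ) (R : Matrix (Fin m) (Fin m) ℝ)
    (hQ : Q.PosSemidef) (hR : R.PosDef)
    (hObs : ∀ x : Fin n → ℝ, (∀ k : ℕ, Q.mulVec ((A ^ k).mulVec x) = 0) → x = 0)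
    (K : Matrix (Fin m) (Fin n) ℝ)
    (hK : SchurStable (A - B * K))
    (P : Matrix (Fin n) (Fin n) ℝ) (hPsymm : P.IsSymm)
    (hP : P = Q + Kᵀ * R * K + (A - B * K)ᵀ * P * (A - B * K))
    (K' : Matrix (Fin m) (Fin n) ℝ)
    (hK' : K' = (R + Bᵀ * P * B)⁻¹ * (Bᵀ * P * A))
    (P' : Matrix (Fin n) (Fin n) ℝ) (hP'symm : P'.IsSymm)
    (hP' : P' = Q + K'ᵀ * R * K' + (A - B * K')ᵀ * P' * (A - B * K')) :
    (P - P').PosSemidef ∧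
      ∀ Pstar : Matrix (Fin n) (Fin n) ℝ, Pstar.PosSemidef →
        Aᵀ * Pstar * A - Pstar - Aᵀ * Pstar * B * (R + Bᵀ * Pstar * B)⁻¹ * (Bᵀ * Pstar * A)
          + Q = 0 →
        (P' - Pstar).PosSemidef := by
  have hRsymm : Rᵀ = R := RicAux.isSymm_of_isHermitian hR.posSemidef.1
  -- P is positive semidefinite
  have hKRKpsd : (Kᵀ * R * K).PosSemidef := by
    have := hR.posSemidef.conjTranspose_mul_mul_same K
    rwa [conjTranspose_eq_transpose_of_trivial] at this
  have hPpsd : P.PosSemidef :=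
    RicAux.lyap_psd hK (hQ.add hKRKpsd) (RicAux.isHermitian_of_isSymm hPsymm) hP
  -- the gain matrix G = R + BᵀPB is positive definite
  have hBPBpsd : (Bᵀ * P * B).PosSemidef := by
    have := hPpsd.conjTranspose_mul_mul_same B
    rwa [conjTranspose_eq_transpose_of_trivial] at this
  have hGpd : (R + Bᵀ * P * B).PosDef := hR.add_posSemidef hBPBpsd
  have hGdet : IsUnit (R + Bᵀ * P * B).det := hGpd.det_pos.ne'.isUnit
  have hGsymm : (R + Bᵀ * P * B)ᵀ = R + Bᵀ * P * B := by
    rw [Matrix.transpose_add, Matrix.transpose_mul, Matrix.transpose_mul,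
      Matrix.transpose_transpose, hRsymm, (hPsymm : Pᵀ = P), ← Matrix.mul_assoc]
  have hGK : (R + Bᵀ * P * B) * K' = Bᵀ * P * A := by
    rw [hK']
    exact Matrix.mul_nonsing_inv_cancel_left _ _ hGdet
  have hKG : K'ᵀ * (R + Bᵀ * P * B) = Aᵀ * P * B := by
    have h := congrArg Matrix.transpose hGK
    rw [Matrix.transpose_mul, hGsymm] at h
    rw [h, Matrix.transpose_mul, Matrix.transpose_mul, Matrix.transpose_transpose,
      (hPsymm : Pᵀ = P), Matrix.mul_assoc]
  -- completion of squares around K'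
  have hcos := RicAux.cos A P B R (R + Bᵀ * P * B) rfl K' hGK hKG K
  have hPeq : P = Q + K'ᵀ * R * K' + (A - B * K')ᵀ * P * (A - B * K')
      + (K - K')ᵀ * (R + Bᵀ * P * B) * (K - K') := by
    conv_lhs => rw [hP]
    rw [add_assoc Q, hcos]
    abel
  have hΔpsd : ((K - K')ᵀ * (R + Bᵀ * P * B) * (K - K')).PosSemidef := by
    have := hGpd.posSemidef.conjTranspose_mul_mul_same (K - K')
    rwa [conjTranspose_eq_transpose_of_trivial] at this
  have hineq : (P - (Q + K'ᵀ * R * K' + (A - B * K')ᵀ * P * (A - B * K'))).PosSemidef := by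
    have h2 : P - (Q + K'ᵀ * R * K' + (A - B * K')ᵀ * P * (A - B * K'))
        = (K - K')ᵀ * (R + Bᵀ * P * B) * (K - K') := by
      calc P - (Q + K'ᵀ * R * K' + (A - B * K')ᵀ * P * (A - B * K'))
          = (Q + K'ᵀ * R * K' + (A - B * K')ᵀ * P * (A - B * K')
              + (K - K')ᵀ * (R + Bᵀ * P * B) * (K - K'))
            - (Q + K'ᵀ * R * K' + (A - B * K')ᵀ * P * (A - B * K')) := by rw [← hPeq]
        _ = (K - K')ᵀ * (R + Bᵀ * P * B) * (K - K') := by abel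
    rw [h2]
    exact hΔpsd
  have hstab : SchurStable (A - B * K') :=
    RicAux.stable_of_obs A B Q R hQ hR hObs K' P hPsymm hPpsd hineq
  constructor
  · -- part 1 : P' ≤ P
    have hsymm : (P - P').IsHermitian :=
      RicAux.isHermitian_of_isSymm (by rw [Matrix.IsSymm, Matrix.transpose_sub,
        (hPsymm : Pᵀ = P), (hP'symm : P'ᵀ = P')])
    have h1 : (A - B * K')ᵀ * (P - P') * (A - B * K')
        = (A - B * K')ᵀ * P * (A - B * K') - (A - B * K')ᵀ * P' * (A - B * K') := by
      noncomm_ring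
    have h2 : P - P' = (Q + K'ᵀ * R * K' + (A - B * K')ᵀ * P * (A - B * K')
          + (K - K')ᵀ * (R + Bᵀ * P * B) * (K - K'))
        - (Q + K'ᵀ * R * K' + (A - B * K')ᵀ * P' * (A - B * K')) := by
      rw [← hPeq, ← hP']
    have heq : P - P' = (K - K')ᵀ * (R + Bᵀ * P * B) * (K - K')
        + (A - B * K')ᵀ * (P - P') * (A - B * K') := by
      rw [h1, h2]
      abel
    exact RicAux.lyap_psd hstab hΔpsd hsymm heq
  · -- part 2 : any PSD solution of the ARE is below P'
    intro Pstar hPstar hARE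
    have hPstarSymm : Pstar.IsSymm := RicAux.isSymm_of_isHermitian hPstar.1
    have hBPBs : (Bᵀ * Pstar * B).PosSemidef := by
      have := hPstar.conjTranspose_mul_mul_same B
      rwa [conjTranspose_eq_transpose_of_trivial] at this
    have hGspd : (R + Bᵀ * Pstar * B).PosDef := hR.add_posSemidef hBPBs
    have hGsdet : IsUnit (R + Bᵀ * Pstar * B).det := hGspd.det_pos.ne'.isUnit
    have hGsSymm : (R + Bᵀ * Pstar * B)ᵀ = R + Bᵀ * Pstar * B := by
      rw [Matrix.transpose_add, Matrix.transpose_mul, Matrix.transpose_mul,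
        Matrix.transpose_transpose, hRsymm, (hPstarSymm : Pstarᵀ = Pstar),
        ← Matrix.mul_assoc]
    set Ks : Matrix (Fin m) (Fin n) ℝ := (R + Bᵀ * Pstar * B)⁻¹ * (Bᵀ * Pstar * A)
      with hKs
    have hGKs : (R + Bᵀ * Pstar * B) * Ks = Bᵀ * Pstar * A := by
      rw [hKs]
      exact Matrix.mul_nonsing_inv_cancel_left _ _ hGsdet
    have hKGs : Ksᵀ * (R + Bᵀ * Pstar * B) = Aᵀ * Pstar * B := by
      have h := congrArg Matrix.transpose hGKs
      rw [Matrix.transpose_mul, hGsSymm] at h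
      rw [h, Matrix.transpose_mul, Matrix.transpose_mul, Matrix.transpose_transpose,
        (hPstarSymm : Pstarᵀ = Pstar), Matrix.mul_assoc]
    -- Pstar satisfies the closed-loop Lyapunov equation for Ks
    have hstar_eq : Q + Ksᵀ * R * Ks + (A - B * Ks)ᵀ * Pstar * (A - B * Ks) = Pstar := by
      have hexp := RicAux.expand_lyap A Pstar B R (R + Bᵀ * Pstar * B) rfl Ks
      have e1 : Ksᵀ * ((R + Bᵀ * Pstar * B) * Ks) = Ksᵀ * (Bᵀ * (Pstar * A)) := by
        rw [hGKs, Matrix.mul_assoc]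
      have e2 : Aᵀ * (Pstar * (B * Ks)) = Ksᵀ * (Bᵀ * (Pstar * A)) := by
        rw [← Matrix.mul_assoc, ← Matrix.mul_assoc, ← hKGs, Matrix.mul_assoc, e1]
      have e3 : Ksᵀ * (Bᵀ * (Pstar * A))
          = Aᵀ * Pstar * B * (R + Bᵀ * Pstar * B)⁻¹ * (Bᵀ * Pstar * A) := by
        have hKst : Ksᵀ = Aᵀ * Pstar * B * (R + Bᵀ * Pstar * B)⁻¹ := by
          rw [hKs]
          rw [Matrix.transpose_mul, Matrix.transpose_mul, Matrix.transpose_mul,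
            Matrix.transpose_nonsing_inv, hGsSymm, Matrix.transpose_transpose,
            (hPstarSymm : Pstarᵀ = Pstar)]
          simp [Matrix.mul_assoc]
        rw [hKst]
        simp [Matrix.mul_assoc]
      rw [add_assoc Q, hexp, e1, e2, e3]
      have hRe : Q + (Aᵀ * (Pstar * A)
            + Aᵀ * Pstar * B * (R + Bᵀ * Pstar * B)⁻¹ * (Bᵀ * Pstar * A)
            - Aᵀ * Pstar * B * (R + Bᵀ * Pstar * B)⁻¹ * (Bᵀ * Pstar * A)
            - Aᵀ * Pstar * B * (R + Bᵀ * Pstar * B)⁻¹ * (Bᵀ * Pstar * A))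
          = (Aᵀ * Pstar * A - Pstar
              - Aᵀ * Pstar * B * (R + Bᵀ * Pstar * B)⁻¹ * (Bᵀ * Pstar * A) + Q)
            + Pstar := by
        rw [Matrix.mul_assoc Aᵀ Pstar A]
        abel
      rw [hRe, hARE, zero_add]
    -- completion of squares at Pstar
    have hcoss := RicAux.cos A Pstar B R (R + Bᵀ * Pstar * B) rfl Ks hGKs hKGs K'
    have hΔspsd : ((K' - Ks)ᵀ * (R + Bᵀ * Pstar * B) * (K' - Ks)).PosSemidef := by
      have := hGspd.posSemidef.conjTranspose_mul_mul_same (K' - Ks)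
      rwa [conjTranspose_eq_transpose_of_trivial] at this
    have hPstar_eq : Q + K'ᵀ * R * K' + (A - B * K')ᵀ * Pstar * (A - B * K')
        = Pstar + (K' - Ks)ᵀ * (R + Bᵀ * Pstar * B) * (K' - Ks) := by
      calc Q + K'ᵀ * R * K' + (A - B * K')ᵀ * Pstar * (A - B * K')
          = (Q + Ksᵀ * R * Ks + (A - B * Ks)ᵀ * Pstar * (A - B * Ks))
            + (K' - Ks)ᵀ * (R + Bᵀ * Pstar * B) * (K' - Ks) := by
            rw [add_assoc Q, hcoss]
            abel
        _ = Pstar + (K' - Ks)ᵀ * (R + Bᵀ * Pstar * B) * (K' - Ks) := by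
            rw [hstar_eq]
    have hsymm : (P' - Pstar).IsHermitian :=
      RicAux.isHermitian_of_isSymm (by rw [Matrix.IsSymm, Matrix.transpose_sub,
        (hP'symm : P'ᵀ = P'), (hPstarSymm : Pstarᵀ = Pstar)])
    have h1 : (A - B * K')ᵀ * (P' - Pstar) * (A - B * K')
        = (A - B * K')ᵀ * P' * (A - B * K') - (A - B * K')ᵀ * Pstar * (A - B * K') := by
      noncomm_ring
    have h2 : P' - Pstar = (Q + K'ᵀ * R * K' + (A - B * K')ᵀ * P' * (A - B * K'))
        - (Pstar + (K' - Ks)ᵀ * (R + Bᵀ * Pstar * B) * (K' - Ks))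
        + (K' - Ks)ᵀ * (R + Bᵀ * Pstar * B) * (K' - Ks) := by
      rw [← hP']
      abel
    have heq : P' - Pstar = (K' - Ks)ᵀ * (R + Bᵀ * Pstar * B) * (K' - Ks)
        + (A - B * K')ᵀ * (P' - Pstar) * (A - B * K') := by
      rw [h1, h2, ← hPstar_eq]
      abel
    exact RicAux.lyap_psd hstab hΔspsd hsymm heq

end RicAuxSection
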